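/- The group G(X) generated by the σ_x acts transitively on X = ℤ/n₁ × ℤ/n₂: for all (a,i),(b,j) there is g ∈ G(X) with g((a,i)) = (b,j). Specifically, σ_{(0,0)}^j ∘ (σ_{(0,1)} σ_{(0,0)}^{-r-1})^b sends (a,i) to (a+b, i+j). -/

import Mathlib

/-- The map `σ_{(a,i)}((b,j)) = (b - ar + i, j + ir - ar² + 1)` of the solution `C(n₁,n₂,r)`. -/
def Csigma {n₁ n₂ : ℕ} (hd : n₁ ∣ n₂) (r : ℕ)
    (x y : ZMod n₁ × ZMod n₂) : ZMod n₁ × ZMod n₂ :=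
  (y.1 - x.1 * (r : ZMod n₁) + ZMod.castHom hd (ZMod n₁) x.2,
   y.2 + x.2 * (r : ZMod n₂) - (x.1.val : ZMod n₂) * (r : ZMod n₂) ^ 2 + 1)

/-- `σ_{(a,i)}` as a permutation: it is translation by a constant. -/
def CsigmaPerm {n₁ n₂ : ℕ} (hd : n₁ ∣ n₂) (r : ℕ) (x : ZMod n₁ × ZMod n₂) :
    Equiv.Perm (ZMod n₁ × ZMod n₂) :=
  Equiv.addLeft (ZMod.castHom hd (ZMod n₁) x.2 - x.1 * (r : ZMod n₁),
    x.2 * (r : ZMod n₂) - (x.1.val : ZMod n₂) * (r : ZMod n₂) ^ 2 + 1)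

lemma key_calc {n₁ n₂ : ℕ} (hd : n₁ ∣ n₂) (r : ℕ)
    (a : ZMod n₁) (i : ZMod n₂) (b j : ℤ) :
    ((CsigmaPerm hd r ((0 : ZMod n₁), (0 : ZMod n₂))) ^ j *
        (CsigmaPerm hd r ((0 : ZMod n₁), (1 : ZMod n₂)) *
          (CsigmaPerm hd r ((0 : ZMod n₁), (0 : ZMod n₂))) ^ (-(r : ℤ) - 1)) ^ b) (a, i) =
        (a + (b : ZMod n₁), i + (j : ZMod n₂)) := by
  simp only [CsigmaPerm, Equiv.zsmul_addLeft, ← Equiv.addLeft_add]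
  simp [Prod.ext_iff, Prod.smul_def, Prod.mul_def, Prod.fst_add, ZMod.natCast_self, map_one]
  constructor <;> ring

/-- `G(X)` acts transitively on `X`; explicitly,
`σ_{(0,0)}^j ∘ (σ_{(0,1)} σ_{(0,0)}^{-r-1})^b` sends `(a,i)` to `(a+b, i+j)`. -/
theorem Csigma_transitive (n₁ n₂ r : ℕ) (h1 : 0 < n₁) (h2 : 0 < n₂) (hd : n₁ ∣ n₂)
    (hr : r < n₂ / n₁) (hr2 : n₂ ∣ n₁ * r ^ 2) :
    (∀ x, ⇑(CsigmaPerm hd r x) = Csigma hd r x) ∧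
    (∀ x y : ZMod n₁ × ZMod n₂,
      ∃ g ∈ Subgroup.closure (Set.range (CsigmaPerm hd r)), g x = y) ∧
    (∀ (a : ZMod n₁) (i : ZMod n₂) (b j : ℤ),
      ((CsigmaPerm hd r ((0 : ZMod n₁), (0 : ZMod n₂))) ^ j *
        (CsigmaPerm hd r ((0 : ZMod n₁), (1 : ZMod n₂)) *
          (CsigmaPerm hd r ((0 : ZMod n₁), (0 : ZMod n₂))) ^ (-(r : ℤ) - 1)) ^ b) (a, i) =
        (a + (b : ZMod n₁), i + (j : ZMod n₂))) := by
  haveI : NeZero n₁ := ⟨h1.ne'⟩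
  haveI : NeZero n₂ := ⟨h2.ne'⟩
  refine ⟨?_, ?_, fun a i b j => key_calc hd r a i b j⟩
  · intro x
    funext y
    simp only [CsigmaPerm, Csigma, Equiv.coe_addLeft, Prod.ext_iff, Prod.fst_add, Prod.snd_add]
    constructor <;> ring
  · intro x y
    have hmem : ∀ z, CsigmaPerm hd r z ∈ Subgroup.closure (Set.range (CsigmaPerm hd r)) :=
      fun z => Subgroup.subset_closure (Set.mem_range_self z)
    refine ⟨(CsigmaPerm hd r ((0 : ZMod n₁), (0 : ZMod n₂))) ^ (((y.2 - x.2).val : ℤ)) *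
        (CsigmaPerm hd r ((0 : ZMod n₁), (1 : ZMod n₂)) *
          (CsigmaPerm hd r ((0 : ZMod n₁), (0 : ZMod n₂))) ^ (-(r : ℤ) - 1)) ^ (((y.1 - x.1).val : ℤ)),
      Subgroup.mul_mem _ (Subgroup.zpow_mem _ (hmem _) _)
      (Subgroup.zpow_mem _ (Subgroup.mul_mem _ (hmem _)
        (Subgroup.zpow_mem _ (hmem _) _)) _), ?_⟩
    have := key_calc hd r x.1 x.2 ((y.1 - x.1).val : ℤ) ((y.2 - x.2).val : ℤ)
    rw [show ((x.1, x.2) : ZMod n₁ × ZMod n₂) = x from rfl] at this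
    rw [this]
    push_cast
    simp [ZMod.natCast_val, ZMod.cast_id]
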